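/- For every n ≥ 1, there exists a directed graph G_n (the n-bubble graph) in which the number of distinct shortest edge-covering closed-free walks from the unique source to the unique sink is exactly 2^n. -/

import Mathlib

/-- A source: a vertex with no incoming edges. -/
def IsSource {V : Type*} (E : V → V → Prop) (v : V) : Prop := ∀ u, ¬ E u v

/-- A sink: a vertex with no outgoing edges. -/
def IsSink {V : Type*} (E : V → V → Prop) (v : V) : Prop := ∀ u, ¬ E v u

/-- An edge-covering walk from `s` to `t`. -/
def IsECWalkFromTo {V : Type*} (E : V → V → Prop) (s t : V) (w : List V) : Prop :=
  w.Chain' E ∧ w.head? = some s ∧ w.getLast? = some t ∧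
  ∀ u v, E u v → [u, v] <:+: w


abbrev Vb (n : ℕ) := Fin (n+2) ⊕ (Fin n × Bool)

def Eb (n : ℕ) : Vb n → Vb n → Prop := fun u v =>
  match u, v with
  | Sum.inl k, Sum.inl m => (m : ℕ) = (k : ℕ) + 1
  | Sum.inl k, Sum.inr p => (k : ℕ) = (p.1 : ℕ) + 1
  | Sum.inr p, Sum.inl k => (k : ℕ) = (p.1 : ℕ) + 1
  | Sum.inr _, Sum.inr _ => False

def tgt (n : ℕ) (f : ℕ → Bool) (p : ℕ) : Vb n :=
  if p = 0 then Sum.inl ⟨0, by omega⟩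
  else if h1 : (p-1) % 5 = 1 ∧ (p-1)/5 < n then Sum.inr (⟨(p-1)/5, h1.2⟩, f ((p-1)/5))
  else if h3 : (p-1) % 5 = 3 ∧ (p-1)/5 < n then Sum.inr (⟨(p-1)/5, h3.2⟩, ! f ((p-1)/5))
  else if h : (p-1)/5 + 1 < n + 2 then Sum.inl ⟨(p-1)/5+1, h⟩ else Sum.inl ⟨0, by omega⟩

def walkOf (n : ℕ) (f : ℕ → Bool) : List (Vb n) :=
  List.ofFn (fun p : Fin (5*n+2) => tgt n f p)

variable {n : ℕ} {f : ℕ → Bool}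

lemma tgt0 : tgt n f 0 = Sum.inl ⟨0, by omega⟩ := by simp [tgt]

lemma tgt_j1 {i : ℕ} (hi : i ≤ n) : tgt n f (5*i+1) = Sum.inl ⟨i+1, by omega⟩ := by
  unfold tgt
  split_ifs with h0 h1 h3 h <;> try omega
  all_goals try exact (by assumption : False).elim
  have e : (5*i+1-1)/5 = i := by omega
  simp only [e]

lemma tgt_j3 {i : ℕ} (hi : i < n) : tgt n f (5*i+3) = Sum.inl ⟨i+1, by omega⟩ := by
  unfold tgt
  split_ifs with h0 h1 h3 h <;> try omega
  all_goals try exact (by assumption : False).elim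
  have e : (5*i+3-1)/5 = i := by omega
  simp only [e]

lemma tgt_j5 {i : ℕ} (hi : i < n) : tgt n f (5*i+5) = Sum.inl ⟨i+1, by omega⟩ := by
  unfold tgt
  split_ifs with h0 h1 h3 h <;> try omega
  all_goals try exact (by assumption : False).elim
  have e : (5*i+5-1)/5 = i := by omega
  simp only [e]

lemma tgt_d2 {i : ℕ} (hi : i < n) : tgt n f (5*i+2) = Sum.inr (⟨i, hi⟩, f i) := by
  unfold tgt
  split_ifs with h0 h1 h3 h <;> try omega
  all_goals try exact (by assumption : False).elim
  have e : (5*i+2-1)/5 = i := by omega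
  simp only [e]

lemma tgt_d4 {i : ℕ} (hi : i < n) : tgt n f (5*i+4) = Sum.inr (⟨i, hi⟩, ! f i) := by
  unfold tgt
  split_ifs with h0 h1 h3 h <;> try omega
  all_goals try exact (by assumption : False).elim
  have e : (5*i+4-1)/5 = i := by omega
  simp only [e]

/-- junction at multiples of 5 -/
lemma tgt_5k {k : ℕ} (hk : k ≤ n) : tgt n f (5*k) = Sum.inl ⟨k, by omega⟩ := by
  rcases Nat.eq_zero_or_pos k with h | h
  · subst h; simpa using tgt0
  · have e : 5*k = 5*(k-1)+5 := by omega
    rw [e, tgt_j5 (by omega)]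
    simp only [Sum.inl.injEq, Fin.mk.injEq]; omega

lemma pos_cases (p : ℕ) (hp : p < 5*n+2) :
    p = 0 ∨ (∃ i, i ≤ n ∧ p = 5*i+1) ∨
      (∃ i, i < n ∧ (p = 5*i+2 ∨ p = 5*i+3 ∨ p = 5*i+4 ∨ p = 5*i+5)) := by
  by_cases h0 : p = 0
  · exact Or.inl h0
  right
  have h5 : (p-1) % 5 = 0 ∨ (p-1)%5 = 1 ∨ (p-1)%5 = 2 ∨ (p-1)%5 = 3 ∨ (p-1)%5 = 4 := by omega
  rcases h5 with h|h|h|h|h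
  · exact Or.inl ⟨(p-1)/5, by omega, by omega⟩
  · exact Or.inr ⟨(p-1)/5, by omega, Or.inl (by omega)⟩
  · exact Or.inr ⟨(p-1)/5, by omega, Or.inr (Or.inl (by omega))⟩
  · exact Or.inr ⟨(p-1)/5, by omega, Or.inr (Or.inr (Or.inl (by omega)))⟩
  · exact Or.inr ⟨(p-1)/5, by omega, Or.inr (Or.inr (Or.inr (by omega)))⟩

/-- classification of inl values -/
lemma tgt_inl {p : ℕ} {a : Fin (n+2)} (hp : p < 5*n+2) (h : tgt n f p = Sum.inl a) :
    (p = 0 ∧ (a:ℕ) = 0) ∨ ∃ i, (a:ℕ) = i+1 ∧ (p = 5*i+1 ∨ p = 5*i+3 ∨ p = 5*i+5) := by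
  rcases pos_cases p hp with h0 | ⟨i, hi, hp'⟩ | ⟨i, hi, hp'⟩
  · subst h0
    rw [tgt0, Sum.inl.injEq] at h
    exact Or.inl ⟨rfl, by rw [← h]⟩
  · subst hp'
    rw [tgt_j1 hi, Sum.inl.injEq] at h
    exact Or.inr ⟨i, by rw [← h], Or.inl rfl⟩
  · rcases hp' with hp' | hp' | hp' | hp' <;> subst hp'
    · rw [tgt_d2 hi] at h; exact absurd h (by simp)
    · rw [tgt_j3 hi, Sum.inl.injEq] at h
      exact Or.inr ⟨i, by rw [← h], Or.inr (Or.inl rfl)⟩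
    · rw [tgt_d4 hi] at h; exact absurd h (by simp)
    · rw [tgt_j5 hi, Sum.inl.injEq] at h
      exact Or.inr ⟨i, by rw [← h], Or.inr (Or.inr rfl)⟩

/-- classification of inr values -/
lemma tgt_inr {p : ℕ} {x : Fin n} {b : Bool} (hp : p < 5*n+2) (h : tgt n f p = Sum.inr (x, b)) :
    (p = 5*(x:ℕ)+2 ∧ b = f x) ∨ (p = 5*(x:ℕ)+4 ∧ b = ! f x) := by
  rcases pos_cases p hp with h0 | ⟨i, hi, hp'⟩ | ⟨i, hi, hp'⟩
  · subst h0; rw [tgt0] at h; exact absurd h (by simp)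
  · subst hp'; rw [tgt_j1 hi] at h; exact absurd h (by simp)
  · rcases hp' with hp' | hp' | hp' | hp' <;> subst hp'
    · rw [tgt_d2 hi, Sum.inr.injEq, Prod.mk.injEq] at h
      have hx : (x:ℕ) = i := by rw [← h.1]
      exact Or.inl ⟨by omega, by rw [← h.2, hx]⟩
    · rw [tgt_j3 hi] at h; exact absurd h (by simp)
    · rw [tgt_d4 hi, Sum.inr.injEq, Prod.mk.injEq] at h
      have hx : (x:ℕ) = i := by rw [← h.1]
      exact Or.inr ⟨by omega, by rw [← h.2, hx]⟩
    · rw [tgt_j5 hi] at h; exact absurd h (by simp)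

def sB (n : ℕ) : Vb n := Sum.inl ⟨0, by omega⟩
def tB (n : ℕ) : Vb n := Sum.inl ⟨n+1, by omega⟩

lemma Eb_inl_inl {k m : Fin (n+2)} : Eb n (Sum.inl k) (Sum.inl m) ↔ (m:ℕ) = (k:ℕ)+1 := Iff.rfl
lemma Eb_inl_inr {k : Fin (n+2)} {x : Fin n} {b : Bool} :
    Eb n (Sum.inl k) (Sum.inr (x,b)) ↔ (k:ℕ) = (x:ℕ)+1 := Iff.rfl
lemma Eb_inr_inl {k : Fin (n+2)} {x : Fin n} {b : Bool} :
    Eb n (Sum.inr (x,b)) (Sum.inl k) ↔ (k:ℕ) = (x:ℕ)+1 := Iff.rfl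
lemma Eb_inr_inr {x y : Fin n} {b c : Bool} :
    Eb n (Sum.inr (x,b)) (Sum.inr (y,c)) ↔ False := Iff.rfl

lemma tgt_step {p : ℕ} (hp : p+1 < 5*n+2) : Eb n (tgt n f p) (tgt n f (p+1)) := by
  rcases pos_cases (n := n) p (by omega) with h0 | ⟨i,hi,hp'⟩ | ⟨i,hi,hp'⟩
  · subst h0
    have e2 : tgt n f (0+1) = Sum.inl ⟨1, by omega⟩ := by
      have := tgt_j1 (n:=n) (f:=f) (i:=0) (by omega)
      simpa using this
    rw [tgt0, e2]
    exact rfl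
  · subst hp'
    have hi' : i < n := by omega
    have e2 : tgt n f (5*i+1+1) = Sum.inr (⟨i, hi'⟩, f i) := tgt_d2 hi'
    rw [tgt_j1 hi, e2]
    exact rfl
  · rcases hp' with hp' | hp' | hp' | hp' <;> subst hp'
    · have e2 : tgt n f (5*i+2+1) = Sum.inl ⟨i+1, by omega⟩ := tgt_j3 hi
      rw [tgt_d2 hi, e2]; exact rfl
    · have e2 : tgt n f (5*i+3+1) = Sum.inr (⟨i, hi⟩, ! f i) := tgt_d4 hi
      rw [tgt_j3 hi, e2]; exact rfl
    · have e2 : tgt n f (5*i+4+1) = Sum.inl ⟨i+1, by omega⟩ := tgt_j5 hi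
      rw [tgt_d4 hi, e2]; exact rfl
    · have e2 : tgt n f (5*i+5+1) = Sum.inl ⟨i+2, by omega⟩ := by
        have := tgt_j1 (n:=n) (f:=f) (i:=i+1) (by omega)
        rw [show 5*(i+1)+1 = 5*i+5+1 from by ring] at this
        simpa using this
      rw [tgt_j5 hi, e2]
      exact rfl

lemma infix_of_getElem {α : Type*} {w : List α} {p : ℕ} (h : p+1 < w.length) :
    [w[p]'(by omega), w[p+1]] <:+: w := by
  have h1 : w.drop p = w[p]'(by omega) :: w.drop (p+1) := List.drop_eq_getElem_cons (by omega)
  have h2 : w.drop (p+1) = w[p+1] :: w.drop (p+2) := List.drop_eq_getElem_cons (by omega)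
  have e : [w[p]'(by omega), w[p+1]] = (w.drop p).take 2 := by
    rw [h1, h2]
    rfl
  rw [e]
  exact (List.take_prefix 2 _).isInfix.trans (List.drop_suffix p w).isInfix

lemma getElem_of_infix {α : Type*} {u v : α} {w : List α} (h : [u,v] <:+: w) :
    ∃ p, ∃ hp : p+1 < w.length, w[p]'(by omega) = u ∧ w[p+1] = v := by
  obtain ⟨s, t, hst⟩ := h
  subst hst
  refine ⟨s.length, by simp, ?_, ?_⟩
  · have h1 : (s ++ ([u,v] ++ t))[s.length]'(by simp) = u := by
      rw [List.getElem_append_right (le_refl _)]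
      simp
    simpa [List.append_assoc] using h1
  · have h1 : (s ++ ([u,v] ++ t))[s.length + 1]'(by simp) = v := by
      rw [List.getElem_append_right (by omega : s.length ≤ s.length+1)]
      have e : s.length + 1 - s.length = 1 := by omega
      simp [e]
    simpa [List.append_assoc] using h1

lemma walkOf_length : (walkOf n f).length = 5*n+2 := by simp [walkOf]

lemma walkOf_getElem {p : ℕ} (hp : p < (walkOf n f).length) :
    (walkOf n f)[p] = tgt n f p := by
  simp only [walkOf, List.getElem_ofFn]

lemma walkOf_chain' : (walkOf n f).Chain' (Eb n) := by
  refine List.isChain_iff_getElem.mpr ?_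
  intro i h
  rw [walkOf_length] at h
  rw [walkOf_getElem, walkOf_getElem]
  exact tgt_step (p := i) (by omega)

lemma walkOf_ne_nil : walkOf n f ≠ [] := by
  intro h
  have := walkOf_length (n := n) (f := f)
  rw [h] at this
  simp at this

lemma walkOf_head : (walkOf n f).head? = some (sB n) := by
  rw [List.head?_eq_head walkOf_ne_nil]
  congr 1
  rw [← List.getElem_zero (by rw [walkOf_length]; omega), walkOf_getElem, tgt0]
  rfl

lemma walkOf_last : (walkOf n f).getLast? = some (tB n) := by
  rw [List.getLast?_eq_getLast walkOf_ne_nil]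
  congr 1
  rw [List.getLast_eq_getElem, walkOf_getElem]
  have e : (walkOf n f).length - 1 = 5*n+1 := by
    rw [walkOf_length]
    omega
  rw [e, tgt_j1 (le_refl n)]
  rfl

lemma Eb_cases {u v : Vb n} (h : Eb n u v) :
    (∃ (k : ℕ) (hk : k ≤ n), u = Sum.inl ⟨k, by omega⟩ ∧ v = Sum.inl ⟨k+1, by omega⟩) ∨
    (∃ (i : ℕ) (hi : i < n) (b : Bool), u = Sum.inl ⟨i+1, by omega⟩ ∧ v = Sum.inr (⟨i,hi⟩, b)) ∨
    (∃ (i : ℕ) (hi : i < n) (b : Bool), u = Sum.inr (⟨i,hi⟩, b) ∧ v = Sum.inl ⟨i+1, by omega⟩) := by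
  rcases u with k | ⟨x, b⟩ <;> rcases v with m | ⟨y, c⟩
  · rw [Eb_inl_inl] at h
    have hk : (k:ℕ) ≤ n := by have := m.isLt; omega
    left
    exact ⟨(k:ℕ), hk, rfl, congrArg _ (Fin.ext h)⟩
  · rw [Eb_inl_inr] at h
    right; left
    exact ⟨(y:ℕ), y.isLt, c, congrArg _ (Fin.ext h), rfl⟩
  · rw [Eb_inr_inl] at h
    right; right
    exact ⟨(x:ℕ), x.isLt, b, rfl, congrArg _ (Fin.ext h)⟩
  · exact absurd h (by rw [Eb_inr_inr]; exact not_false)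

def fT : ℕ → Bool := fun _ => true

/-- every edge occurs as a consecutive pair in the canonical walk -/
lemma Eb_iff_pair {u v : Vb n} :
    Eb n u v ↔ ∃ p : Fin (5*n+1), u = tgt n fT (p:ℕ) ∧ v = tgt n fT ((p:ℕ)+1) := by
  constructor
  · intro h
    rcases Eb_cases h with ⟨k, hk, hu, hv⟩ | ⟨i, hi, b, hu, hv⟩ | ⟨i, hi, b, hu, hv⟩
    · refine ⟨⟨5*k, by omega⟩, ?_, ?_⟩
      · rw [hu, tgt_5k hk]
      · have : tgt n fT (5*k+1) = Sum.inl ⟨k+1, by omega⟩ := tgt_j1 hk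
        rw [hv, this]
    · rcases b with _ | _
      · -- b = false : position 5i+3
        refine ⟨⟨5*i+3, by omega⟩, ?_, ?_⟩
        · rw [hu, tgt_j3 hi]
        · have : tgt n fT (5*i+3+1) = Sum.inr (⟨i,hi⟩, ! fT i) := tgt_d4 hi
          rw [hv, this]
          rfl
      · refine ⟨⟨5*i+1, by omega⟩, ?_, ?_⟩
        · rw [hu, tgt_j1 (by omega)]
        · have : tgt n fT (5*i+1+1) = Sum.inr (⟨i,hi⟩, fT i) := tgt_d2 hi
          rw [hv, this]
          rfl
    · rcases b with _ | _
      · refine ⟨⟨5*i+4, by omega⟩, ?_, ?_⟩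
        · have : tgt n fT (5*i+4) = Sum.inr (⟨i,hi⟩, ! fT i) := tgt_d4 hi
          rw [hu, this]
          rfl
        · have : tgt n fT (5*i+4+1) = Sum.inl ⟨i+1, by omega⟩ := tgt_j5 hi
          rw [hv, this]
      · refine ⟨⟨5*i+2, by omega⟩, ?_, ?_⟩
        · have : tgt n fT (5*i+2) = Sum.inr (⟨i,hi⟩, fT i) := tgt_d2 hi
          rw [hu, this]
          rfl
        · have : tgt n fT (5*i+2+1) = Sum.inl ⟨i+1, by omega⟩ := tgt_j3 hi
          rw [hv, this]
  · rintro ⟨p, hu, hv⟩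
    rw [hu, hv]
    exact tgt_step (by omega)

/-- covering property of the canonical walks -/
lemma walkOf_cover {u v : Vb n} (h : Eb n u v) : [u,v] <:+: walkOf n f := by
  rcases Eb_cases h with ⟨k, hk, hu, hv⟩ | ⟨i, hi, b, hu, hv⟩ | ⟨i, hi, b, hu, hv⟩
  · have hp : 5*k+1 < (walkOf n f).length := by rw [walkOf_length]; omega
    have h0 := infix_of_getElem hp
    rw [walkOf_getElem, walkOf_getElem, tgt_5k hk, tgt_j1 hk] at h0
    rw [hu, hv]
    exact h0
  · by_cases hb : b = f i
    · have hp : 5*i+1+1 < (walkOf n f).length := by rw [walkOf_length]; omega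
      have h0 := infix_of_getElem hp
      have e2 : tgt n f (5*i+1+1) = Sum.inr (⟨i,hi⟩, f i) := tgt_d2 hi
      rw [walkOf_getElem, walkOf_getElem, tgt_j1 (by omega), e2] at h0
      rw [hu, hv, hb]
      exact h0
    · have hb' : b = ! f i := by
        rcases b <;> rcases hfi : f i <;> simp_all
      have hp : 5*i+3+1 < (walkOf n f).length := by rw [walkOf_length]; omega
      have h0 := infix_of_getElem hp
      have e2 : tgt n f (5*i+3+1) = Sum.inr (⟨i,hi⟩, ! f i) := tgt_d4 hi
      rw [walkOf_getElem, walkOf_getElem, tgt_j3 hi, e2] at h0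
      rw [hu, hv, hb']
      exact h0
  · by_cases hb : b = f i
    · have hp : 5*i+2+1 < (walkOf n f).length := by rw [walkOf_length]; omega
      have h0 := infix_of_getElem hp
      have e2 : tgt n f (5*i+2+1) = Sum.inl ⟨i+1, by omega⟩ := tgt_j3 hi
      rw [walkOf_getElem, walkOf_getElem, tgt_d2 hi, e2] at h0
      rw [hu, hv, hb]
      exact h0
    · have hb' : b = ! f i := by
        rcases b <;> rcases hfi : f i <;> simp_all
      have hp : 5*i+4+1 < (walkOf n f).length := by rw [walkOf_length]; omega
      have h0 := infix_of_getElem hp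
      have e2 : tgt n f (5*i+4+1) = Sum.inl ⟨i+1, by omega⟩ := tgt_j5 hi
      rw [walkOf_getElem, walkOf_getElem, tgt_d4 hi, e2] at h0
      rw [hu, hv, hb']
      exact h0

lemma walkOf_isEC : IsECWalkFromTo (Eb n) (sB n) (tB n) (walkOf n f) :=
  ⟨walkOf_chain', walkOf_head, walkOf_last, fun _ _ h => walkOf_cover h⟩

section Pairs
variable {α : Type*}

lemma length_pairs {w : List α} : (w.zip w.tail).length = w.length - 1 := by
  simp only [List.length_zip, List.length_tail]
  omega

lemma pairs_getElem {w : List α} {p : ℕ} (hp : p+1 < w.length) :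
    (w.zip w.tail)[p]'(by rw [length_pairs]; omega) = (w[p]'(by omega), w[p+1]) := by
  rw [List.getElem_zip, List.getElem_tail]

lemma mem_pairs_of {w : List α} {p : ℕ} (hp : p+1 < w.length) :
    (w[p]'(by omega), w[p+1]) ∈ w.zip w.tail := by
  rw [List.mem_iff_getElem]
  exact ⟨p, by rw [length_pairs]; omega, pairs_getElem hp⟩

lemma mem_pairs {x : α × α} {w : List α} (h : x ∈ w.zip w.tail) :
    ∃ p, ∃ hp : p+1 < w.length, w[p]'(by omega) = x.1 ∧ w[p+1] = x.2 := by
  rw [List.mem_iff_getElem] at h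
  obtain ⟨p, hp, he⟩ := h
  have hp' : p+1 < w.length := by rw [length_pairs] at hp; omega
  rw [pairs_getElem hp'] at he
  exact ⟨p, hp', congrArg Prod.fst he, congrArg Prod.snd he⟩

lemma chain_getElem {E : α → α → Prop} {w : List α} (hch : w.Chain' E) {p : ℕ}
    (hp : p+1 < w.length) : E (w[p]'(by omega)) w[p+1] := by
  have hch := List.isChain_iff_getElem.mp hch
  have := hch p (by omega)
  simpa [List.get_eq_getElem] using this

end Pairs

def edgeL (n : ℕ) : List (Vb n × Vb n) :=
  List.ofFn (fun p : Fin (5*n+1) => (tgt n fT (p:ℕ), tgt n fT ((p:ℕ)+1)))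

def posE (n : ℕ) : Vb n × Vb n → ℕ
  | (Sum.inl _, Sum.inl m) => 5 * ((m:ℕ) - 1)
  | (Sum.inl _, Sum.inr (i, b)) => if b then 5*(i:ℕ)+1 else 5*(i:ℕ)+3
  | (Sum.inr (i, b), _) => if b then 5*(i:ℕ)+2 else 5*(i:ℕ)+4

lemma posE_tgt {p : ℕ} (hp : p < 5*n+1) : posE n (tgt n fT p, tgt n fT (p+1)) = p := by
  rcases pos_cases (n := n) p (by omega) with h0 | ⟨i,hi,hp'⟩ | ⟨i,hi,hp'⟩
  · subst h0
    have e2 : tgt n fT (0+1) = Sum.inl ⟨1, by omega⟩ := by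
      have := tgt_j1 (n:=n) (f:=fT) (i:=0) (by omega)
      simpa using this
    rw [tgt0, e2]
    rfl
  · subst hp'
    have hi' : i < n := by omega
    have e2 : tgt n fT (5*i+1+1) = Sum.inr (⟨i, hi'⟩, fT i) := tgt_d2 hi'
    rw [tgt_j1 hi, e2]
    simp [posE, fT]
  · rcases hp' with hp' | hp' | hp' <;> try subst hp'
    · have e2 : tgt n fT (5*i+2+1) = Sum.inl ⟨i+1, by omega⟩ := tgt_j3 hi
      rw [tgt_d2 hi, e2]
      simp [posE, fT]
    · have e2 : tgt n fT (5*i+3+1) = Sum.inr (⟨i, hi⟩, ! fT i) := tgt_d4 hi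
      rw [tgt_j3 hi, e2]
      simp [posE, fT]
    · rcases hp' with hp' | hp' <;> subst hp'
      · have e2 : tgt n fT (5*i+4+1) = Sum.inl ⟨i+1, by omega⟩ := tgt_j5 hi
        rw [tgt_d4 hi, e2]
        simp [posE, fT]
      · have e2 : tgt n fT (5*i+5+1) = Sum.inl ⟨i+2, by omega⟩ := by
          have := tgt_j1 (n:=n) (f:=fT) (i:=i+1) (by omega)
          rw [show 5*(i+1)+1 = 5*i+5+1 from by ring] at this
          simpa using this
        rw [tgt_j5 hi, e2]
        simp [posE]
        omega

lemma edgeL_nodup : (edgeL n).Nodup := by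
  rw [edgeL, List.nodup_ofFn]
  intro p q h
  have h1 := congrArg (posE n) h
  rw [posE_tgt (by omega), posE_tgt (by omega)] at h1
  exact Fin.ext h1

lemma edgeL_length : (edgeL n).length = 5*n+1 := by simp [edgeL]

lemma mem_edgeL_iff {x : Vb n × Vb n} : x ∈ edgeL n ↔ Eb n x.1 x.2 := by
  rw [edgeL, List.mem_ofFn]
  constructor
  · rintro ⟨p, hp⟩
    rw [← hp]
    exact tgt_step (by omega)
  · intro h
    obtain ⟨p, hu, hv⟩ := Eb_iff_pair.mp h
    refine ⟨p, ?_⟩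
    show (tgt n fT (p:ℕ), tgt n fT ((p:ℕ)+1)) = x
    rw [← hu, ← hv]

lemma edgeL_subset_pairs {w : List (Vb n)} (hcov : ∀ u v, Eb n u v → [u,v] <:+: w) :
    edgeL n ⊆ w.zip w.tail := by
  intro x hx
  have hE : Eb n x.1 x.2 := mem_edgeL_iff.mp hx
  obtain ⟨p, hp, h1, h2⟩ := getElem_of_infix (hcov x.1 x.2 hE)
  have := mem_pairs_of hp
  rw [h1, h2] at this
  simpa using this

lemma length_lb {w : List (Vb n)} (hcov : ∀ u v, Eb n u v → [u,v] <:+: w)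
    (hne : w ≠ []) : 5*n+2 ≤ w.length := by
  have hsub := (edgeL_nodup.subperm (edgeL_subset_pairs hcov)).length_le
  rw [edgeL_length, length_pairs] at hsub
  have h1 : 1 ≤ w.length := List.length_pos_iff.mpr hne
  omega

lemma pairs_nodup {w : List (Vb n)} (hcov : ∀ u v, Eb n u v → [u,v] <:+: w)
    (hch : w.Chain' (Eb n)) (hlen : w.length = 5*n+2) : (w.zip w.tail).Nodup := by
  have hsub := edgeL_nodup.subperm (edgeL_subset_pairs hcov)
  have hperm : (edgeL n).Perm (w.zip w.tail) :=
    hsub.perm_of_length_le (by rw [edgeL_length, length_pairs, hlen]; omega)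
  exact hperm.nodup edgeL_nodup

lemma pairs_unique {w : List (Vb n)} (hnd : (w.zip w.tail).Nodup) {p q : ℕ}
    (hp : p+1 < w.length) (hq : q+1 < w.length)
    (h1 : w[p]'(by omega) = w[q]'(by omega)) (h2 : w[p+1] = w[q+1]) : p = q := by
  have hp' : p < (w.zip w.tail).length := by rw [length_pairs]; omega
  have hq' : q < (w.zip w.tail).length := by rw [length_pairs]; omega
  have he : (w.zip w.tail)[p] = (w.zip w.tail)[q] := by
    rw [pairs_getElem hp, pairs_getElem hq, h1, h2]
  exact (hnd.getElem_inj_iff).mp he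

lemma finmk_eq {N : ℕ} (a : Fin N) {v : ℕ} (hv : v < N) (h : (a:ℕ) = v) : a = ⟨v, hv⟩ :=
  Fin.ext h

lemma finmk_mk {N a b : ℕ} (ha : a < N) (hb : b < N) (h : a = b) :
    (⟨a, ha⟩ : Fin N) = ⟨b, hb⟩ := Fin.ext h

/-- The key "no early jump" descent argument. -/
lemma descent (W : ℕ → Vb n)
    (hstep : ∀ p, p+1 < 5*n+2 → Eb n (W p) (W (p+1)))
    (hcov : ∀ u v, Eb n u v → ∃ p, p+1 < 5*n+2 ∧ W p = u ∧ W (p+1) = v)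
    (huniq : ∀ p q, p+1 < 5*n+2 → q+1 < 5*n+2 → W p = W q → W (p+1) = W (q+1) → p = q)
    {i : ℕ} (hi : i < n) (b : Bool) {P : ℕ} (hP : P < 5*n+2)
    {K : Fin (n+2)} (hPv : W P = Sum.inl K) (hKv : (K:ℕ) = i+2)
    {R : ℕ} (hR : R+1 ≤ P)
    (hRv : W R = Sum.inl ⟨i, by omega⟩) (hRv1 : W (R+1) = Sum.inl ⟨i+1, by omega⟩)
    (hbef : ∀ m, m+1 < 5*n+2 → m < P → W m = Sum.inl ⟨i+1, by omega⟩ →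
        W (m+1) ≠ Sum.inr (⟨i,hi⟩, b)) : False := by
  classical
  obtain ⟨m₀, hm₀, hm₀1, hm₀2⟩ :=
    hcov (Sum.inl ⟨i+1, by omega⟩) (Sum.inr (⟨i,hi⟩, b)) rfl
  have hm₀P : P < m₀ := by
    rcases Nat.lt_trichotomy m₀ P with h | h | h
    · exact absurd hm₀2 (hbef m₀ hm₀ h hm₀1)
    · exfalso
      subst h
      have h1 : Sum.inl (α := Fin (n+2)) (β := Fin n × Bool) K
          = Sum.inl ⟨i+1, by omega⟩ := hPv.symm.trans hm₀1
      rw [Sum.inl.injEq] at h1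
      have h2 : (K:ℕ) = i+1 := by rw [h1]
      omega
    · exact h
  have hex : ∃ q, q < 5*n+2 ∧ P < q ∧ W q = Sum.inl ⟨i+1, by omega⟩ :=
    ⟨m₀, by omega, hm₀P, hm₀1⟩
  set Q := Nat.find hex with hQdef
  have hspec := Nat.find_spec hex
  have hmin : ∀ q, q < Q → ¬(q < 5*n+2 ∧ P < q ∧ W q = Sum.inl ⟨i+1, by omega⟩) :=
    fun q hq => Nat.find_min hex hq
  have hQlt : Q < 5*n+2 := hspec.1
  have hQP : P < Q := hspec.2.1
  have hQv : W Q = Sum.inl ⟨i+1, by omega⟩ := hspec.2.2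
  have hchQ := hstep (Q-1) (by omega)
  rw [show Q-1+1 = Q from by omega] at hchQ
  rcases hu : W (Q-1) with k | ⟨x, c⟩
  · rw [hu, hQv] at hchQ
    have hk : i + 1 = (k:ℕ) + 1 := hchQ
    have hRQ : Q - 1 = R := by
      apply huniq (Q-1) R (by omega) (by omega)
      · rw [hu, hRv]
        exact congrArg _ (finmk_eq _ _ (by omega))
      · rw [show Q-1+1 = Q from by omega, hQv, hRv1]
    omega
  · rw [hu, hQv] at hchQ
    have hx : i + 1 = (x:ℕ) + 1 := hchQ
    have hQP2 : P < Q - 1 := by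
      rcases Nat.lt_or_ge P (Q-1) with h | h
      · exact h
      · exfalso
        have he : Q - 1 = P := by omega
        rw [he, hPv] at hu
        exact nomatch hu
    have hch2 := hstep (Q-2) (by omega)
    rw [show Q-2+1 = Q-1 from by omega, hu] at hch2
    rcases hu2 : W (Q-2) with k2 | p2
    · rw [hu2] at hch2
      have hk2 : (k2:ℕ) = (x:ℕ) + 1 := hch2
      have hQP3 : P < Q - 2 := by
        rcases Nat.lt_or_ge P (Q-2) with h | h
        · exact h
        · exfalso
          have he : Q - 2 = P := by omega
          rw [he, hPv] at hu2
          rw [Sum.inl.injEq] at hu2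
          have hKk : (K:ℕ) = (k2:ℕ) := by rw [hu2]
          omega
      refine hmin (Q-2) (by omega) ⟨by omega, by omega, ?_⟩
      rw [hu2]
      exact congrArg _ (finmk_eq _ _ (by omega))
    · rw [hu2] at hch2
      exact hch2

/-- Reconstruction: any suitable indexed walk is one of the canonical walks. -/
lemma reconstructW (W : ℕ → Vb n)
    (hstep : ∀ p, p+1 < 5*n+2 → Eb n (W p) (W (p+1)))
    (hcov : ∀ u v, Eb n u v → ∃ p, p+1 < 5*n+2 ∧ W p = u ∧ W (p+1) = v)
    (huniq : ∀ p q, p+1 < 5*n+2 → q+1 < 5*n+2 → W p = W q → W (p+1) = W (q+1) → p = q)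
    (h0 : W 0 = Sum.inl ⟨0, by omega⟩) :
    ∃ g : ℕ → Bool, ∀ p, p < 5*n+2 → W p = tgt n g p := by
  classical
  set g : ℕ → Bool :=
    fun j => match W (5*j+2) with | Sum.inr (_, c) => c | _ => true with hgdef
  have hg : ∀ j y c, W (5*j+2) = Sum.inr (y, c) → g j = c := by
    intro j y c hv
    have hgj : g j = match W (5*j+2) with | Sum.inr (_, c) => c | _ => true := rfl
    rw [hgj, hv]
  refine ⟨g, ?_⟩
  intro p
  induction p using Nat.strong_induction_on with
  | _ p IH =>
  intro hp
  rcases pos_cases (n := n) p hp with h0' | ⟨i, hi, hp'⟩ | ⟨i, hi, hp'⟩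
  · subst h0'
    rw [tgt0]
    exact h0
  · subst hp'
    rcases Nat.eq_zero_or_pos i with rfl | hipos
    · -- p = 5*0+1 = 1
      have h01 := hstep 0 (by omega)
      rw [h0] at h01
      rw [tgt_j1 (by omega)]
      rcases hv : W (0+1) with m | ⟨y, c⟩
      · rw [hv] at h01
        have hm : (m:ℕ) = 0 + 1 := h01
        exact congrArg _ (finmk_eq _ _ (by omega))
      · rw [hv] at h01
        have hy : (0:ℕ) = (y:ℕ) + 1 := h01
        omega
    · -- i ≥ 1
      have h5i := IH (5*i) (by omega) (by omega)
      rw [tgt_5k (by omega)] at h5i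
      have hstepi := hstep (5*i) (by omega)
      rw [h5i] at hstepi
      rcases hv : W (5*i+1) with m | ⟨y, c⟩
      · rw [hv] at hstepi
        have hm : (m:ℕ) = i + 1 := hstepi
        rw [tgt_j1 hi]
        exact congrArg _ (finmk_eq _ _ (by omega))
      · exfalso
        rw [hv] at hstepi
        have hy : (i:ℕ) = (y:ℕ) + 1 := hstepi
        have e1 : W (5*(i-1)+1) = Sum.inl ⟨i, by omega⟩ := by
          have h' := IH (5*(i-1)+1) (by omega) (by omega)
          rw [tgt_j1 (by omega)] at h'
          rw [h']
          exact congrArg _ (finmk_mk _ _ (by omega))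
        have e2 : W (5*(i-1)+2) = Sum.inr (⟨i-1, by omega⟩, g (i-1)) := by
          have h' := IH (5*(i-1)+2) (by omega) (by omega)
          rw [tgt_d2 (by omega)] at h'
          exact h'
        have e3 : W (5*(i-1)+3) = Sum.inl ⟨i, by omega⟩ := by
          have h' := IH (5*(i-1)+3) (by omega) (by omega)
          rw [tgt_j3 (by omega)] at h'
          rw [h']
          exact congrArg _ (finmk_mk _ _ (by omega))
        have e4 : W (5*(i-1)+4) = Sum.inr (⟨i-1, by omega⟩, ! g (i-1)) := by
          have h' := IH (5*(i-1)+4) (by omega) (by omega)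
          rw [tgt_d4 (by omega)] at h'
          exact h'
        have hyv : y = (⟨i-1, by omega⟩ : Fin n) := finmk_eq _ _ (by omega)
        by_cases hc : c = g (i-1)
        · have := huniq (5*i) (5*(i-1)+1) (by omega) (by omega)
            (by rw [h5i, e1]) (by
              have h1 := congrArg₂ (fun (a : Fin n) (b : Bool) => (Sum.inr (a,b) : Vb n)) hyv hc
              exact hv.trans (h1.trans (e2.symm.trans (congrArg W (by omega)))))
          omega
        · have hc' : c = ! g (i-1) := Bool.eq_not_of_ne hc
          have := huniq (5*i) (5*(i-1)+3) (by omega) (by omega)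
            (by rw [h5i, e3]) (by
              have h1 := congrArg₂ (fun (a : Fin n) (b : Bool) => (Sum.inr (a,b) : Vb n)) hyv hc'
              exact hv.trans (h1.trans (e4.symm.trans (congrArg W (by omega)))))
          omega
  · -- p = 5*i+2, 5*i+3, 5*i+4 or 5*i+5, with i < n
    have hj1 : W (5*i+1) = Sum.inl ⟨i+1, by omega⟩ := by
      have h' := IH (5*i+1) (by omega) (by omega)
      rwa [tgt_j1 (by omega)] at h'
    rcases hp' with hp' | hp' | hp' | hp' <;> subst hp'
    · -- p = 5*i+2
      have hstepi := hstep (5*i+1) (by omega)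
      rw [hj1, show 5*i+1+1 = 5*i+2 from by omega] at hstepi
      rcases hv : W (5*i+2) with m | ⟨y, c⟩
      · exfalso
        rw [hv] at hstepi
        have hm : (m:ℕ) = i+1+1 := hstepi
        refine descent W hstep hcov huniq hi true (by omega : 5*i+2 < 5*n+2) hv
          (by omega) (by omega : 5*i+1 ≤ 5*i+2) ?_ ?_ ?_
        · have h' := IH (5*i) (by omega) (by omega)
          rw [tgt_5k (by omega)] at h'
          exact h'
        · exact hj1
        · intro m' hm' hm'P hval hcontra
          have hm'' := IH m' (by omega) (by omega)
          have hcl := tgt_inl (n := n) (f := g) (by omega : m' < 5*n+2)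
            (hm''.symm.trans hval)
          rcases hcl with ⟨h1, h2⟩ | ⟨i', hi', hcase⟩
          · have h3 : i+1 = 0 := h2
            omega
          · have h3 : i+1 = i'+1 := hi'
            have hm'eq : m' = 5*i+1 := by omega
            subst hm'eq
            rw [show 5*i+1+1 = 5*i+2 from by omega, hv] at hcontra
            exact nomatch hcontra
      · rw [hv] at hstepi
        have hy : i+1 = (y:ℕ)+1 := hstepi
        have hgc : g i = c := hg i y c hv
        have hyv : y = (⟨i, hi⟩ : Fin n) := finmk_eq _ _ (by omega)
        rw [tgt_d2 hi, hgc, hyv]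
    · -- p = 5*i+3
      have hd2 : W (5*i+2) = Sum.inr (⟨i, hi⟩, g i) := by
        have h' := IH (5*i+2) (by omega) (by omega)
        rwa [tgt_d2 hi] at h'
      have hstepi := hstep (5*i+2) (by omega)
      rw [hd2, show 5*i+2+1 = 5*i+3 from by omega] at hstepi
      rcases hv : W (5*i+3) with m | ⟨y, c⟩
      · rw [hv] at hstepi
        have hm : (m:ℕ) = i+1 := hstepi
        rw [tgt_j3 hi]
        exact congrArg _ (finmk_eq _ _ (by omega))
      · rw [hv] at hstepi
        exact absurd hstepi (by rw [Eb_inr_inr]; exact not_false)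
    · -- p = 5*i+4
      have hd2 : W (5*i+2) = Sum.inr (⟨i, hi⟩, g i) := by
        have h' := IH (5*i+2) (by omega) (by omega)
        rwa [tgt_d2 hi] at h'
      have hj3 : W (5*i+3) = Sum.inl ⟨i+1, by omega⟩ := by
        have h' := IH (5*i+3) (by omega) (by omega)
        rwa [tgt_j3 hi] at h'
      have hstepi := hstep (5*i+3) (by omega)
      rw [hj3, show 5*i+3+1 = 5*i+4 from by omega] at hstepi
      rcases hv : W (5*i+4) with m | ⟨y, c⟩
      · exfalso
        rw [hv] at hstepi
        have hm : (m:ℕ) = i+1+1 := hstepi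
        refine descent W hstep hcov huniq hi (! g i) (by omega : 5*i+4 < 5*n+2) hv
          (by omega) (by omega : 5*i+1 ≤ 5*i+4) ?_ ?_ ?_
        · have h' := IH (5*i) (by omega) (by omega)
          rw [tgt_5k (by omega)] at h'
          exact h'
        · exact hj1
        · intro m' hm' hm'P hval hcontra
          have hm'' := IH m' (by omega) (by omega)
          have hcl := tgt_inl (n := n) (f := g) (by omega : m' < 5*n+2)
            (hm''.symm.trans hval)
          rcases hcl with ⟨h1, h2⟩ | ⟨i', hi', hcase⟩
          · have h3 : i+1 = 0 := h2
            omega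
          · have h3 : i+1 = i'+1 := hi'
            have hm'eq : m' = 5*i+1 ∨ m' = 5*i+3 := by omega
            rcases hm'eq with hm'eq | hm'eq <;> subst hm'eq
            · rw [show 5*i+1+1 = 5*i+2 from by omega, hd2] at hcontra
              rw [Sum.inr.injEq, Prod.mk.injEq] at hcontra
              have : g i = ! g i := hcontra.2
              simp at this
            · rw [show 5*i+3+1 = 5*i+4 from by omega, hv] at hcontra
              exact nomatch hcontra
      · rw [hv] at hstepi
        have hy : i+1 = (y:ℕ)+1 := hstepi
        have hyv : y = (⟨i, hi⟩ : Fin n) := finmk_eq _ _ (by omega)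
        have hc : c = ! g i := by
          by_cases hcc : c = g i
          · exfalso
            have := huniq (5*i+3) (5*i+1) (by omega) (by omega)
              (by rw [hj3, hj1]) (by
                have h1 := congrArg₂ (fun (a : Fin n) (b : Bool) => (Sum.inr (a,b) : Vb n)) hyv hcc
                exact (congrArg W (by omega : 5*i+3+1 = 5*i+4)).trans
                  (hv.trans (h1.trans (hd2.symm.trans (congrArg W (by omega))))))
            omega
          · exact Bool.eq_not_of_ne hcc
        rw [tgt_d4 hi, hyv, hc]
    · -- p = 5*i+5
      have hd4 : W (5*i+4) = Sum.inr (⟨i, hi⟩, ! g i) := by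
        have h' := IH (5*i+4) (by omega) (by omega)
        rwa [tgt_d4 hi] at h'
      have hstepi := hstep (5*i+4) (by omega)
      rw [hd4, show 5*i+4+1 = 5*i+5 from by omega] at hstepi
      rcases hv : W (5*i+5) with m | ⟨y, c⟩
      · rw [hv] at hstepi
        have hm : (m:ℕ) = i+1 := hstepi
        rw [tgt_j5 hi]
        exact congrArg _ (finmk_eq _ _ (by omega))
      · rw [hv] at hstepi
        exact absurd hstepi (by rw [Eb_inr_inr]; exact not_false)

lemma tgt_congr {f f' : ℕ → Bool} (h : ∀ j, j < n → f j = f' j) (p : ℕ) :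
    tgt n f p = tgt n f' p := by
  unfold tgt
  split_ifs with h0 h1 h3 hh
  all_goals try rfl
  all_goals try exact (by assumption : False).elim
  · rw [h _ h1.2]
  · rw [h _ h3.2]

lemma reconstruct {w : List (Vb n)} (hw : IsECWalkFromTo (Eb n) (sB n) (tB n) w)
    (hlen : w.length = 5*n+2) : ∃ g : ℕ → Bool, w = walkOf n g := by
  obtain ⟨hch, hhd, hlast, hcov⟩ := hw
  have hne : w ≠ [] := by intro h; rw [h] at hlen; simp at hlen
  set W : ℕ → Vb n := fun p => w.getD p (sB n) with hWdef
  have hWe : ∀ p (hp : p < w.length), W p = w[p]'hp := by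
    intro p hp
    exact List.getD_eq_getElem w (sB n) hp
  have hstep : ∀ p, p+1 < 5*n+2 → Eb n (W p) (W (p+1)) := by
    intro p hp
    rw [hWe p (by omega), hWe (p+1) (by omega)]
    exact chain_getElem hch (by omega)
  have hcov' : ∀ u v, Eb n u v → ∃ p, p+1 < 5*n+2 ∧ W p = u ∧ W (p+1) = v := by
    intro u v h
    obtain ⟨p, hp, h1, h2⟩ := getElem_of_infix (hcov u v h)
    refine ⟨p, by omega, ?_, ?_⟩
    · rw [hWe p (by omega)]; exact h1
    · rw [hWe (p+1) (by omega)]; exact h2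
  have hnd := pairs_nodup hcov hch hlen
  have huniq : ∀ p q, p+1 < 5*n+2 → q+1 < 5*n+2 → W p = W q → W (p+1) = W (q+1) → p = q := by
    intro p q hp hq h1 h2
    rw [hWe p (by omega), hWe q (by omega)] at h1
    rw [hWe (p+1) (by omega), hWe (q+1) (by omega)] at h2
    exact pairs_unique hnd (by omega) (by omega) h1 h2
  have h0 : W 0 = Sum.inl ⟨0, by omega⟩ := by
    rw [hWe 0 (by omega), List.getElem_zero (by omega)]
    have h3 := List.head?_eq_head (l := w) hne
    rw [hhd] at h3
    exact (Option.some.inj h3).symm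
  obtain ⟨g, hgall⟩ := reconstructW W hstep hcov' huniq h0
  refine ⟨g, List.ext_getElem (by rw [hlen, walkOf_length]) ?_⟩
  intro p h1 h2
  rw [walkOf_getElem, ← hWe p h1]
  exact hgall p (by omega)

lemma ec_ne_nil {w : List (Vb n)} (hw : IsECWalkFromTo (Eb n) (sB n) (tB n) w) : w ≠ [] := by
  intro h
  rw [h] at hw
  simpa using hw.2.1

lemma ec_length_lb {w : List (Vb n)} (hw : IsECWalkFromTo (Eb n) (sB n) (tB n) w) :
    5*n+2 ≤ w.length :=
  length_lb hw.2.2.2 (ec_ne_nil hw)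

theorem bubble_graph_exponential_solutions (n : ℕ) (hn : 1 ≤ n) :
    ∃ (V : Type) (_ : Fintype V) (E : V → V → Prop) (s t : V),
      (∀ v, IsSource E v ↔ v = s) ∧
      (∀ v, IsSink E v ↔ v = t) ∧
      (∃ w, IsECWalkFromTo E s t w) ∧
      {w : List V | IsECWalkFromTo E s t w ∧
          ∀ w', IsECWalkFromTo E s t w' → w.length ≤ w'.length}.ncard = 2 ^ n := by
  classical
  refine ⟨Vb n, inferInstance, Eb n, sB n, tB n, ?_, ?_, ⟨walkOf n fT, walkOf_isEC⟩, ?_⟩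
  · -- unique source
    intro v
    constructor
    · intro hs
      rcases v with k | ⟨x, b⟩
      · rcases Nat.eq_zero_or_pos (k:ℕ) with hk | hk
        · exact congrArg Sum.inl (Fin.ext hk)
        · exfalso
          refine hs (Sum.inl ⟨(k:ℕ)-1, by omega⟩) ?_
          show (k:ℕ) = ((k:ℕ)-1) + 1
          omega
      · exfalso
        refine hs (Sum.inl ⟨(x:ℕ)+1, by omega⟩) ?_
        show ((x:ℕ)+1 : ℕ) = (x:ℕ) + 1
        rfl
    · rintro rfl u hE
      rcases u with k | ⟨x, b⟩
      · have : (0:ℕ) = (k:ℕ)+1 := hE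
        omega
      · have : (0:ℕ) = (x:ℕ)+1 := hE
        omega
  · -- unique sink
    intro v
    constructor
    · intro hs
      rcases v with k | ⟨x, b⟩
      · rcases Nat.lt_or_ge (k:ℕ) (n+1) with hk | hk
        · exfalso
          refine hs (Sum.inl ⟨(k:ℕ)+1, by omega⟩) ?_
          show ((k:ℕ)+1 : ℕ) = (k:ℕ) + 1
          rfl
        · have : (k:ℕ) = n+1 := by have := k.isLt; omega
          exact congrArg Sum.inl (Fin.ext this)
      · exfalso
        refine hs (Sum.inl ⟨(x:ℕ)+1, by omega⟩) ?_
        show ((x:ℕ)+1 : ℕ) = (x:ℕ) + 1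
        rfl
    · rintro rfl u hE
      rcases u with k | ⟨x, b⟩
      · have : (k:ℕ) = (n+1)+1 := hE
        have := k.isLt
        omega
      · have : (n:ℕ)+1 = (x:ℕ)+1 := hE
        have := x.isLt
        omega
  · -- counting
    have hminlen : ∀ w', IsECWalkFromTo (Eb n) (sB n) (tB n) w' → 5*n+2 ≤ w'.length :=
      fun w' hw' => ec_length_lb hw'
    have hset : {w : List (Vb n) | IsECWalkFromTo (Eb n) (sB n) (tB n) w ∧
          ∀ w', IsECWalkFromTo (Eb n) (sB n) (tB n) w' → w.length ≤ w'.length}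
        = (fun g : Fin n → Bool =>
            walkOf n (fun j => if h : j < n then g ⟨j,h⟩ else true)) '' Set.univ := by
      ext w
      simp only [Set.mem_setOf_eq, Set.mem_image, Set.mem_univ, true_and]
      constructor
      · rintro ⟨hw, hmin⟩
        have hub := hmin (walkOf n fT) walkOf_isEC
        rw [walkOf_length] at hub
        have hlen : w.length = 5*n+2 := le_antisymm hub (hminlen w hw)
        obtain ⟨g, rfl⟩ := reconstruct hw hlen
        refine ⟨fun j => g (j:ℕ), ?_⟩
        apply List.ext_getElem (by rw [walkOf_length, walkOf_length])
        intro p h1 h2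
        rw [walkOf_getElem, walkOf_getElem]
        apply tgt_congr
        intro j hj
        rw [dif_pos hj]
      · rintro ⟨g, rfl⟩
        refine ⟨walkOf_isEC, ?_⟩
        intro w' hw'
        rw [walkOf_length]
        exact hminlen w' hw'
    have hinj : Function.Injective (fun g : Fin n → Bool =>
        walkOf n (fun j => if h : j < n then g ⟨j,h⟩ else true)) := by
      intro g g' he
      funext x
      have hx1 : 5*(x:ℕ)+2 < (walkOf n (fun j => if h : j < n then g ⟨j,h⟩ else true)).length := by
        rw [walkOf_length]; have := x.isLt; omega
      have e1 := List.getElem_of_eq he (i := 5*(x:ℕ)+2) hx1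
      rw [walkOf_getElem, walkOf_getElem, tgt_d2 x.isLt, tgt_d2 x.isLt] at e1
      rw [Sum.inr.injEq, Prod.mk.injEq] at e1
      have e2 := e1.2
      rw [dif_pos x.isLt, dif_pos x.isLt] at e2
      exact e2
    rw [hset, Set.ncard_image_of_injective _ hinj, Set.ncard_univ, Nat.card_eq_fintype_card]
    simp
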